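/- For any integer n ≥ 1 and any prime p, Σ_{k=1}^{p-1} B_{n+k} − Σ_{k=1}^{n-1} B_k ≡ D_{p-1} (mod p). -/

import Mathlib

open Polynomial Finset

/-- Stirling numbers of the second kind. -/
def stirling2 : ℕ → ℕ → ℕ
  | 0, 0 => 1
  | 0, _ + 1 => 0
  | _ + 1, 0 => 0
  | n + 1, k + 1 => (k + 1) * stirling2 n (k + 1) + stirling2 n k

/-- Signed Stirling numbers of the first kind. -/
def stirling1 : ℕ → ℕ → ℤ
  | 0, 0 => 1
  | 0, _ + 1 => 0
  | n + 1, 0 => -(n : ℤ) * stirling1 n 0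
  | n + 1, k + 1 => stirling1 n k - (n : ℤ) * stirling1 n (k + 1)

/-- The Bell polynomial `B_m(x) = ∑_{j=0}^m S(m,j) x^j` over `ℤ`. -/
noncomputable def bellPoly (m : ℕ) : Polynomial ℤ :=
  ∑ j ∈ range (m + 1), (stirling2 m j : ℤ) • X ^ j

/-- The derangement polynomial `D_m(x) = ∑_{j=0}^m C(m,j) j! (x-1)^{m-j}` over `ℤ`. -/
noncomputable def derPoly (m : ℕ) : Polynomial ℤ :=
  ∑ j ∈ range (m + 1), ((m.choose j * j.factorial : ℕ) : ℤ) • (X - 1) ^ (m - j)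

/-- The Bell numbers `B_m = ∑_j S(m,j)`. -/
def bell (m : ℕ) : ℕ := ∑ j ∈ range (m + 1), stirling2 m j

lemma stirling2_eq_zero_of_lt : ∀ {k j : ℕ}, k < j → stirling2 k j = 0
  | 0, _ + 1, _ => rfl
  | k + 1, j + 1, h => by
    have hk : k < j := Nat.lt_of_succ_lt_succ h
    show (j + 1) * stirling2 k (j + 1) + stirling2 k j = 0
    rw [stirling2_eq_zero_of_lt hk, stirling2_eq_zero_of_lt (Nat.lt_succ_of_lt hk), mul_zero]

lemma stirling2_self : ∀ n : ℕ, stirling2 n n = 1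
  | 0 => rfl
  | n + 1 => by
    show (n + 1) * stirling2 n (n + 1) + stirling2 n n = 1
    rw [stirling2_eq_zero_of_lt (Nat.lt_succ_self n), stirling2_self n, mul_zero]

lemma stirling2_one (k : ℕ) : stirling2 1 k = if k = 1 then 1 else 0 := by
  match k with
  | 0 => rfl
  | 1 => rfl
  | k + 2 => exact stirling2_eq_zero_of_lt (by omega)


noncomputable def F (j k : ℕ) : ℤ := ∑ i ∈ range (j + 1), (-1 : ℤ) ^ (j + i) * j.choose i * (i : ℤ) ^ k

lemma F_succ_eq (j k : ℕ) :
    F (j + 1) k = (∑ i ∈ range (j + 1), (-1 : ℤ) ^ (j + i) * j.choose i * ((i : ℤ) + 1) ^ k) - F j k := by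
  have hB : (∑ i ∈ range (j + 1), (-1 : ℤ) ^ (j + i) * j.choose (i + 1) * ((i : ℤ) + 1) ^ k)
      = -F j k + (-1 : ℤ) ^ j * (0 : ℤ) ^ k := by
    have h1 : F j k = ∑ i ∈ range j, (-1 : ℤ) ^ (j + (i + 1)) * j.choose (i + 1) * ((i : ℤ) + 1) ^ k
        + (-1 : ℤ) ^ (j + 0) * j.choose 0 * (0 : ℤ) ^ k := by
      rw [F, Finset.sum_range_succ']; push_cast; ring_nf
    have h2 : (∑ i ∈ range (j + 1), (-1 : ℤ) ^ (j + i) * j.choose (i + 1) * ((i : ℤ) + 1) ^ k)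
        = ∑ i ∈ range j, (-1 : ℤ) ^ (j + i) * j.choose (i + 1) * ((i : ℤ) + 1) ^ k := by
      rw [Finset.sum_range_succ, Nat.choose_succ_self]; push_cast; ring
    rw [h2, h1]
    have key : ∀ i ∈ range j, (-1 : ℤ) ^ (j + i) * j.choose (i + 1) * ((i : ℤ) + 1) ^ k
        = -((-1 : ℤ) ^ (j + (i + 1)) * j.choose (i + 1) * ((i : ℤ) + 1) ^ k) := by
      intro i _
      rw [pow_add, pow_add]; push_cast; ring
    rw [Finset.sum_congr rfl key, Finset.sum_neg_distrib]
    simp only [Nat.choose_zero_right, Nat.cast_one, Nat.add_zero]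
    ring
  have expand : F (j + 1) k = (∑ i ∈ range (j + 1),
      ((-1 : ℤ) ^ (j + i) * j.choose i * ((i : ℤ) + 1) ^ k
        + (-1 : ℤ) ^ (j + i) * j.choose (i + 1) * ((i : ℤ) + 1) ^ k))
      + (-1 : ℤ) ^ (j + 1) * (0 : ℤ) ^ k := by
    rw [F, Finset.sum_range_succ']
    refine congrArg₂ (· + ·) (Finset.sum_congr rfl fun i _ => ?_) (by simp)
    rw [Nat.choose_succ_succ]
    have : ((j + 1) + (i + 1)) = (j + i) + 2 := by ring
    rw [this, pow_add]
    push_cast; ring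
  rw [expand, Finset.sum_add_distrib, hB, pow_succ]
  ring

lemma stirling2_key : ∀ (k j : ℕ), (j.factorial : ℤ) * stirling2 k j = F j k := by
  intro k
  induction k with
  | zero =>
    intro j
    have h : ∀ i ∈ range (j + 1), (-1 : ℤ) ^ (j + i) * j.choose i * (i : ℤ) ^ 0
        = (-1 : ℤ) ^ j * ((-1 : ℤ) ^ i * j.choose i) := by
      intro i _; rw [pow_add]; ring
    rw [F, Finset.sum_congr rfl h, ← Finset.mul_sum, Int.alternating_sum_range_choose]
    match j with
    | 0 => simp [stirling2]
    | j + 1 => simp [stirling2_eq_zero_of_lt (Nat.succ_pos j)]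
  | succ k ih =>
    intro j
    match j with
    | 0 =>
      show (1 : ℤ) * stirling2 (k + 1) 0 = _
      simp [stirling2, F]
    | j + 1 =>
      -- RHS reduction
      have rhs : F (j + 1) (k + 1)
          = (j + 1) * ∑ i ∈ range (j + 1), (-1 : ℤ) ^ (j + i) * j.choose i * ((i : ℤ) + 1) ^ k := by
        rw [F, Finset.sum_range_succ']
        have f0 : (-1:ℤ)^(j+1+0) * (((j+1).choose 0 : ℕ) : ℤ) * ((0:ℕ) : ℤ)^(k+1) = 0 := by simp
        rw [f0, add_zero, Finset.mul_sum]
        refine Finset.sum_congr rfl fun i _ => ?_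
        have h1 : ((j + 1) + (i + 1)) = (j + i) + 2 := by ring
        have h2 : ((j + 1).choose (i + 1) : ℤ) * (i + 1) = (j + 1) * j.choose i := by
          have := Nat.add_one_mul_choose_eq j i
          have := congrArg (fun t : ℕ => (t : ℤ)) this
          push_cast at this
          linarith
        rw [h1, pow_add]
        push_cast
        calc (-1:ℤ) ^ (j+i) * (-1)^2 * (j+1).choose (i+1) * ((i:ℤ)+1)^(k+1)
            = ((-1:ℤ) ^ (j+i) * ((i:ℤ)+1)^k) * (((j + 1).choose (i + 1) : ℤ) * ((i:ℤ) + 1)) := by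
              rw [pow_succ]; ring
          _ = _ := by rw [h2]; ring
      -- LHS reduction
      show (((j + 1).factorial : ℤ)) * ((j + 1) * stirling2 k (j + 1) + stirling2 k j) = _
      have lhs : (((j + 1).factorial : ℤ)) * ((j + 1) * stirling2 k (j + 1) + stirling2 k j)
          = (j + 1) * (F (j + 1) k + F j k) := by
        rw [← ih (j + 1), ← ih j, Nat.factorial_succ]
        push_cast; ring
      rw [lhs, rhs, F_succ_eq]
      ring

section ModP
variable (p : ℕ) [hp : Fact p.Prime]

lemma geo_sum (x : ZMod p) : ∑ k ∈ range p, x ^ k = if x = 1 then 0 else 1 := by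
  split_ifs with h
  · subst h; simp [Finset.sum_const, CharP.cast_eq_zero]
  · have hx : x - 1 ≠ 0 := sub_ne_zero.mpr h
    apply mul_right_cancel₀ hx
    rw [geom_sum_mul, ZMod.pow_card, one_mul]

lemma stirling2_key_zmod (k j : ℕ) : ((j.factorial : ZMod p)) * stirling2 k j =
    ∑ i ∈ range (j + 1), (-1 : ZMod p) ^ (j + i) * j.choose i * (i : ZMod p) ^ k := by
  have := congrArg (fun t : ℤ => (t : ZMod p)) (stirling2_key k j)
  simp only [F] at this
  push_cast at this
  exact this

lemma factorial_ne_zero_zmod {j : ℕ} (h : j < p) : ((j.factorial : ZMod p)) ≠ 0 := by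
  rw [Ne, ZMod.natCast_eq_zero_iff]
  intro hdvd
  exact absurd (hp.out.dvd_factorial.mp hdvd) (by omega)

lemma natCast_eq_one_iff {i : ℕ} (h : i < p) : (i : ZMod p) = 1 ↔ i = 1 := by
  have h1 : ((1 : ℕ) : ZMod p) = (1 : ZMod p) := by push_cast; rfl
  rw [← h1, ZMod.natCast_eq_natCast_iff', Nat.mod_eq_of_lt h,
    Nat.mod_eq_of_lt hp.out.one_lt]

lemma stirling2_p (k : ℕ) (hk : k < p) :
    ((stirling2 p k : ZMod p)) = if k = 1 then 1 else 0 := by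
  have key := stirling2_key_zmod p p k
  have key1 := stirling2_key_zmod p 1 k
  have heq : (∑ i ∈ range (k + 1), (-1 : ZMod p) ^ (k + i) * k.choose i * (i : ZMod p) ^ p)
      = ∑ i ∈ range (k + 1), (-1 : ZMod p) ^ (k + i) * k.choose i * (i : ZMod p) ^ 1 := by
    refine Finset.sum_congr rfl fun i _ => ?_
    rw [ZMod.pow_card, pow_one]
  rw [heq, ← key1] at key
  have := mul_left_cancel₀ (factorial_ne_zero_zmod p hk) key
  rw [this, stirling2_one]
  split_ifs <;> simp


lemma stirling2_touchard : ∀ (n k : ℕ), ((stirling2 (n + p) k : ZMod p)) =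
    (stirling2 (n + 1) k : ZMod p) + if p ≤ k then (stirling2 n (k - p) : ZMod p) else 0 := by
  intro n
  induction n with
  | zero =>
    intro k
    rcases lt_trichotomy k p with h | h | h
    · rw [if_neg (by omega), add_zero, Nat.zero_add, stirling2_p p k h, zero_add, stirling2_one]
      simp [apply_ite (fun t : ℕ => (t : ZMod p))]
    · subst h
      rw [Nat.zero_add, if_pos le_rfl, stirling2_self, Nat.sub_self,
        stirling2_eq_zero_of_lt hp.out.one_lt]
      simp [stirling2]
    · rw [Nat.zero_add, stirling2_eq_zero_of_lt h, if_pos (le_of_lt h),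
        stirling2_eq_zero_of_lt (show 1 < k from lt_trans hp.out.one_lt h),
        stirling2_eq_zero_of_lt (show 0 < k - p by omega)]
      simp [stirling2]
  | succ n ih =>
    intro k
    have e1 : n + 1 + p = (n + p) + 1 := by ring
    match k with
    | 0 =>
      rw [if_neg (by have := hp.out.pos; omega), e1]
      show ((0 : ℕ) : ZMod p) = ((0 : ℕ) : ZMod p) + 0
      simp
    | k + 1 =>
      rw [e1]
      have lexp : stirling2 ((n + p) + 1) (k + 1)
          = (k + 1) * stirling2 (n + p) (k + 1) + stirling2 (n + p) k := rfl
      have rexp : stirling2 (n + 1 + 1) (k + 1)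
          = (k + 1) * stirling2 (n + 1) (k + 1) + stirling2 (n + 1) k := rfl
      rw [lexp, rexp]
      push_cast
      rw [ih (k + 1), ih k]
      by_cases hc : p ≤ k
      · have hc1 : p ≤ k + 1 := le_of_lt (Nat.lt_succ_of_le hc)
        rw [if_pos hc, if_pos hc1, if_pos hc1]
        have e2 : k + 1 - p = (k - p) + 1 := by omega
        rw [e2]
        have rexp2 : stirling2 (n + 1) ((k - p) + 1)
            = ((k - p) + 1) * stirling2 n ((k - p) + 1) + stirling2 n (k - p) := rfl
        rw [rexp2]
        have hcast : ((k : ZMod p) + 1) = (((k - p : ℕ) : ZMod p) + 1) := by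
          have : ((k - p) + 1 + p : ℕ) = k + 1 := by omega
          calc ((k : ZMod p) + 1) = (((k + 1 : ℕ) : ZMod p)) := by push_cast; ring
            _ = (((k - p) + 1 + p : ℕ) : ZMod p) := by rw [this]
            _ = ((k - p : ℕ) : ZMod p) + 1 := by push_cast [ZMod.natCast_self]; ring
        push_cast
        rw [hcast]
        ring
      · by_cases hc1 : p ≤ k + 1
        · have hkp : k + 1 = p := by omega
          rw [if_pos hc1, if_pos hc1, if_neg hc]
          have e2 : k + 1 - p = 0 := by omega
          rw [e2]
          have h0 : stirling2 (n + 1) 0 = 0 := rfl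
          have hzero : ((k : ZMod p) + 1) = 0 := by
            calc ((k : ZMod p) + 1) = (((k + 1 : ℕ) : ZMod p)) := by push_cast; ring
              _ = 0 := by rw [hkp, ZMod.natCast_self]
          rw [h0]
          push_cast
          rw [mul_add, hzero]
          ring
        · rw [if_neg hc, if_neg hc1, if_neg hc1]
          ring

lemma bell_touchard (n : ℕ) : ((bell (n + p) : ZMod p)) = (bell (n + 1) : ZMod p) + bell n := by
  unfold bell
  push_cast
  rw [Finset.sum_congr rfl (fun k _ => stirling2_touchard p n k), Finset.sum_add_distrib]
  congr 1
  · -- ∑ k ∈ range (n+p+1), S(n+1,k) = ∑ k ∈ range (n+2), S(n+1,k)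
    symm
    apply Finset.sum_subset
    · apply Finset.range_subset_range.mpr
      have := hp.out.one_lt; omega
    · intro k _ hk
      rw [stirling2_eq_zero_of_lt (by simp at hk ⊢; omega : n + 1 < k)]
      simp
  · have e : n + p + 1 = p + (n + 1) := by ring
    rw [e, Finset.sum_range_add]
    have h1 : ∀ k ∈ range p, (if p ≤ k then ((stirling2 n (k - p) : ℕ) : ZMod p) else 0) = 0 := by
      intro k hk
      rw [if_neg (by simp at hk; omega)]
    rw [Finset.sum_congr rfl h1, Finset.sum_const, smul_zero, zero_add]
    refine Finset.sum_congr rfl fun i _ => ?_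
    rw [if_pos (Nat.le_add_right p i), Nat.add_sub_cancel_left]


lemma column_sum (j : ℕ) (hj : j < p) :
    ((j.factorial : ZMod p)) * ∑ k ∈ range p, ((stirling2 k j : ℕ) : ZMod p)
      = (if j = 0 then 1 else 0) + (-1 : ZMod p) ^ j * j := by
  rw [Finset.mul_sum]
  rw [Finset.sum_congr rfl (fun k _ => stirling2_key_zmod p k j), Finset.sum_comm]
  have h1 : ∀ i ∈ range (j + 1),
      (∑ k ∈ range p, (-1 : ZMod p) ^ (j + i) * j.choose i * (i : ZMod p) ^ k)
      = (-1 : ZMod p) ^ (j + i) * j.choose i - (if i = 1 then (-1 : ZMod p) ^ (j + i) * j.choose i else 0) := by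
    intro i hi
    rw [← Finset.mul_sum, geo_sum]
    have hip : i < p := by simp at hi; omega
    simp only [natCast_eq_one_iff p hip]
    split_ifs with h <;> ring
  rw [Finset.sum_congr rfl h1, Finset.sum_sub_distrib, Finset.sum_ite_eq']
  have halt : (∑ i ∈ range (j + 1), (-1 : ZMod p) ^ (j + i) * (j.choose i : ZMod p))
      = if j = 0 then 1 else 0 := by
    have := congrArg (fun t : ℤ => (t : ZMod p)) (Int.alternating_sum_range_choose (n := j))
    push_cast at this
    have h2 : ∀ i ∈ range (j + 1), (-1 : ZMod p) ^ (j + i) * (j.choose i : ZMod p)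
        = (-1 : ZMod p) ^ j * ((-1 : ZMod p) ^ i * (j.choose i : ZMod p)) := by
      intro i _; rw [pow_add]; ring
    rw [Finset.sum_congr rfl h2, ← Finset.mul_sum, this]
    split_ifs with h <;> simp [h]
  rw [halt]
  match j with
  | 0 => simp
  | j + 1 =>
    rw [if_neg (Nat.succ_ne_zero j), if_pos (by simp : 1 ∈ range (j + 1 + 1))]
    rw [Nat.choose_one_right]
    rw [pow_add]
    push_cast
    ring

lemma bell_sum_eq (hpos : 0 < p) :
    (∑ k ∈ range p, ((bell k : ℕ) : ZMod p))
      = 1 - ∑ t ∈ range (p - 1), (-1 : ZMod p) ^ t * ((t.factorial : ZMod p))⁻¹ := by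
  have swap : (∑ k ∈ range p, ((bell k : ℕ) : ZMod p))
      = ∑ j ∈ range p, ∑ k ∈ range p, ((stirling2 k j : ℕ) : ZMod p) := by
    rw [← Finset.sum_comm]
    refine Finset.sum_congr rfl fun k hk => ?_
    rw [bell]
    push_cast
    apply Finset.sum_subset
    · apply Finset.range_subset_range.mpr; simp at hk; omega
    · intro j _ hj
      rw [stirling2_eq_zero_of_lt (by simp at hj ⊢; omega : k < j)]
      simp
  have col : ∀ j ∈ range p, (∑ k ∈ range p, ((stirling2 k j : ℕ) : ZMod p))
      = ((j.factorial : ZMod p))⁻¹ * ((if j = 0 then 1 else 0) + (-1 : ZMod p) ^ j * j) := by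
    intro j hj
    have hjp : j < p := by simpa using hj
    rw [← column_sum p j hjp, ← mul_assoc, inv_mul_cancel₀ (factorial_ne_zero_zmod p hjp), one_mul]
  rw [swap, Finset.sum_congr rfl col]
  have split : ∀ j ∈ range p, ((j.factorial : ZMod p))⁻¹ * ((if j = 0 then 1 else 0) + (-1 : ZMod p) ^ j * j)
      = (if j = 0 then 1 else 0) + ((j.factorial : ZMod p))⁻¹ * ((-1 : ZMod p) ^ j * j) := by
    intro j _
    split_ifs with h
    · subst h; simp
    · simp
  rw [Finset.sum_congr rfl split, Finset.sum_add_distrib, Finset.sum_ite_eq',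
    if_pos (by simpa using hpos : 0 ∈ range p)]
  have e : range p = range ((p - 1) + 1) := by congr 1; omega
  rw [e, Finset.sum_range_succ']
  simp only [Nat.cast_zero, mul_zero, add_zero]
  have hterm : ∀ t ∈ range (p - 1),
      (((t + 1).factorial : ℕ) : ZMod p)⁻¹ * ((-1 : ZMod p) ^ (t + 1) * ((t + 1 : ℕ) : ZMod p))
      = -((-1 : ZMod p) ^ t * ((t.factorial : ℕ) : ZMod p)⁻¹) := by
    intro t ht
    have htp : t + 1 < p := by simp at ht; omega
    have hne : ((t + 1 : ℕ) : ZMod p) ≠ 0 := by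
      rw [Ne, ZMod.natCast_eq_zero_iff]
      intro hdvd
      have := Nat.le_of_dvd (Nat.succ_pos t) hdvd
      omega
    have hfact : (((t + 1).factorial : ℕ) : ZMod p) = ((t + 1 : ℕ) : ZMod p) * ((t.factorial : ℕ) : ZMod p) := by
      rw [Nat.factorial_succ]; push_cast; ring
    rw [hfact, mul_inv]
    have hre : ((t + 1 : ℕ) : ZMod p)⁻¹ * ((t.factorial : ℕ) : ZMod p)⁻¹ * ((-1 : ZMod p) ^ (t + 1) * ((t + 1 : ℕ) : ZMod p))
        = (((t + 1 : ℕ) : ZMod p)⁻¹ * ((t + 1 : ℕ) : ZMod p)) * (((t.factorial : ℕ) : ZMod p)⁻¹ * (-1 : ZMod p) ^ (t + 1)) := by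
      ring
    rw [hre, inv_mul_cancel₀ hne, one_mul, pow_succ]
    ring
  rw [Finset.sum_congr rfl hterm, Finset.sum_neg_distrib]
  ring

lemma neg_one_pow_sub_one : (-1 : ZMod p) ^ (p - 1) = 1 := by
  rcases hp.out.eq_two_or_odd' with h | h
  · have h1 : p - 1 = 1 := by omega
    rw [h1, pow_one]
    have h2 : ((2 : ℕ) : ZMod p) = 0 := by rw [← h]; exact ZMod.natCast_self p
    push_cast at h2
    linear_combination (-1 : ZMod p) * h2
  · exact Even.neg_one_pow (Nat.Odd.sub_odd h odd_one)

lemma derangement_eq :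
    ((numDerangements (p - 1) : ℕ) : ZMod p)
      = 1 - ∑ t ∈ range (p - 1), (-1 : ZMod p) ^ t * ((t.factorial : ZMod p))⁻¹ := by
  have base := congrArg (fun t : ℤ => (t : ZMod p)) (numDerangements_sum (p - 1))
  push_cast at base
  rw [base]
  have term : ∀ k ∈ range ((p - 1) + 1),
      (-1 : ZMod p) ^ k * (((k + 1).ascFactorial ((p - 1) - k) : ℕ) : ZMod p)
      = -((-1 : ZMod p) ^ k * ((k.factorial : ZMod p))⁻¹) := by
    intro k hk
    have hkp : k ≤ p - 1 := by simp at hk; omega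
    have hfa : (k.factorial : ℕ) * ((k + 1).ascFactorial ((p - 1) - k)) = (p - 1).factorial := by
      rw [Nat.factorial_mul_ascFactorial]
      congr 1
      omega
    have hcast := congrArg (fun t : ℕ => (t : ZMod p)) hfa
    push_cast at hcast
    have hkfne : ((k.factorial : ℕ) : ZMod p) ≠ 0 := factorial_ne_zero_zmod p (by have := hp.out.two_le; omega)
    have hasc : (((k + 1).ascFactorial ((p - 1) - k) : ℕ) : ZMod p)
        = ((k.factorial : ℕ) : ZMod p)⁻¹ * (((p - 1).factorial : ℕ) : ZMod p) := by
      rw [show (((p - 1).factorial : ℕ) : ZMod p) = -1 from ZMod.wilsons_lemma p] at hcast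
      field_simp
      rw [mul_comm]
      rw [ZMod.wilsons_lemma p]; exact hcast
    rw [hasc, ZMod.wilsons_lemma p]
    ring
  rw [Finset.sum_congr rfl term, Finset.sum_range_succ]
  have h2 : (((p - 1).factorial : ℕ) : ZMod p)⁻¹ = -1 := by
    rw [ZMod.wilsons_lemma p, inv_neg, inv_one]
  rw [Finset.sum_neg_distrib, h2, neg_one_pow_sub_one p]
  ring

lemma crux : (∑ k ∈ range p, ((bell k : ℕ) : ZMod p)) = ((numDerangements (p - 1) : ℕ) : ZMod p) := by
  rw [bell_sum_eq p hp.out.pos, derangement_eq p]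

lemma Icc_eq_Ico : Icc 1 (p - 1) = Ico 1 p := by
  rw [← Finset.Ico_add_one_right_eq_Icc]
  congr 1
  have := hp.out.pos
  omega

lemma base_case : (∑ k ∈ Icc 1 (p - 1), ((bell (1 + k) : ℕ) : ZMod p))
    = ((numDerangements (p - 1) : ℕ) : ZMod p) := by
  rw [Icc_eq_Ico p, Finset.sum_Ico_eq_sum_range]
  have h1 : ∀ i ∈ range (p - 1), ((bell (1 + (1 + i)) : ℕ) : ZMod p) = ((bell (i + 2) : ℕ) : ZMod p) := by
    intro i _
    rw [show 1 + (1 + i) = i + 2 by omega]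
  rw [Finset.sum_congr rfl h1]
  have expand : (∑ k ∈ range (p + 1), ((bell k : ℕ) : ZMod p))
      = (∑ i ∈ range (p - 1), ((bell (i + 2) : ℕ) : ZMod p)) + ((bell 1 : ℕ) : ZMod p) + ((bell 0 : ℕ) : ZMod p) := by
    rw [Finset.sum_range_succ']
    have e : range p = range ((p - 1) + 1) := by congr 1; have := hp.out.pos; omega
    rw [e, Finset.sum_range_succ']
  have expand2 : (∑ k ∈ range (p + 1), ((bell k : ℕ) : ZMod p))
      = (∑ k ∈ range p, ((bell k : ℕ) : ZMod p)) + ((bell p : ℕ) : ZMod p) := Finset.sum_range_succ _ p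
  have htou : ((bell p : ℕ) : ZMod p) = ((bell 1 : ℕ) : ZMod p) + ((bell 0 : ℕ) : ZMod p) := by
    have h0 := bell_touchard p 0
    rw [Nat.zero_add] at h0
    rw [h0]
  have hfin := expand.symm.trans expand2
  rw [htou, crux p] at hfin
  linear_combination hfin

end ModP

theorem bell_sum_derangement (n p : ℕ) (hn : 1 ≤ n) (hp : p.Prime) :
    ((∑ k ∈ Icc 1 (p - 1), (bell (n + k) : ℤ)) - ∑ k ∈ Icc 1 (n - 1), (bell k : ℤ)) ≡
      (numDerangements (p - 1) : ℤ) [ZMOD p] := by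
  haveI : Fact p.Prime := ⟨hp⟩
  rw [← ZMod.intCast_eq_intCast_iff]
  push_cast
  induction n, hn using Nat.le_induction with
  | base =>
    rw [show Icc 1 (1 - 1) = (∅ : Finset ℕ) from rfl, Finset.sum_empty, sub_zero]
    exact base_case p
  | succ n hn ih =>
    have hsplit : (∑ k ∈ Icc 1 n, ((bell k : ℕ) : ZMod p))
        = (∑ k ∈ Icc 1 (n - 1), ((bell k : ℕ) : ZMod p)) + ((bell n : ℕ) : ZMod p) := by
      have e : n = (n - 1) + 1 := by omega
      rw [e, Finset.sum_Icc_succ_top (by omega)]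
      rw [← e]
    have htel : (∑ k ∈ Icc 1 (p - 1), ((bell (n + 1 + k) : ℕ) : ZMod p))
        = (∑ k ∈ Icc 1 (p - 1), ((bell (n + k) : ℕ) : ZMod p)) + ((bell n : ℕ) : ZMod p) := by
      have key : (∑ k ∈ Icc 1 (p - 1),
          (((bell (n + 1 + k) : ℕ) : ZMod p) - ((bell (n + k) : ℕ) : ZMod p)))
          = ((bell (n + p) : ℕ) : ZMod p) - ((bell (n + 1) : ℕ) : ZMod p) := by
        rw [Icc_eq_Ico p, Finset.sum_Ico_eq_sum_range]
        have h1 : ∀ i ∈ range (p - 1),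
            (((bell (n + 1 + (1 + i)) : ℕ) : ZMod p) - ((bell (n + (1 + i)) : ℕ) : ZMod p))
            = (fun j => ((bell (n + 1 + j) : ℕ) : ZMod p)) (i + 1) - (fun j => ((bell (n + 1 + j) : ℕ) : ZMod p)) i := by
          intro i _
          simp only
          congr 3 <;> omega
        rw [Finset.sum_congr rfl h1,
          Finset.sum_range_sub (fun j => ((bell (n + 1 + j) : ℕ) : ZMod p)) (p - 1)]
        beta_reduce
        rw [show n + 1 + (p - 1) = n + p by have := hp.pos; omega,
          show n + 1 + 0 = n + 1 by omega]
      rw [Finset.sum_sub_distrib] at key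
      have htou := bell_touchard p n
      rw [htou] at key
      linear_combination key
    rw [Nat.add_sub_cancel, hsplit, htel]
    linear_combination ih
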